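/- The moments of the Bergman-like shift B₊^{(2)} (weights aₙ = √(2 − 1/(n+2))) satisfy γₙ := ∏_{j=0}^{n-1}(2 − 1/(j+2)) = ∫₀² sⁿ · s/(π·√(2s − s²)) ds for all n ≥ 0; that is, the measure dξ₂(s) = s ds/(π√(2s−s²)) on [0,2] is a Berger measure for B₊^{(2)}. -/

import Mathlib

open MeasureTheory Finset Set

lemma intAux (m : ℕ) :
    IntervalIntegrable (fun s : ℝ => s ^ (m + 1) / Real.sqrt (2 * s - s ^ 2))
      volume 0 2 := by
  have hdom : IntervalIntegrable
      (fun s : ℝ => (2:ℝ) ^ (m + 1) * ((2 - s) ^ (-(1/2:ℝ)))) volume 0 2 := by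
    have h : IntervalIntegrable (fun s : ℝ => s ^ (-(1/2:ℝ))) volume 0 2 :=
      intervalIntegral.intervalIntegrable_rpow' (by norm_num)
    have h2 := h.comp_sub_left 2
    simp only [sub_zero, show (2:ℝ) - 2 = 0 by norm_num] at h2
    exact (h2.symm).const_mul _
  apply hdom.mono_fun'
  · exact ((measurable_id.pow_const (m+1)).div
      (((measurable_const.mul measurable_id).sub
        (measurable_id.pow_const 2)).sqrt)).aestronglyMeasurable
  · rw [Filter.EventuallyLE, ae_restrict_iff' measurableSet_uIoc]
    apply Filter.Eventually.of_forall
    intro s hs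
    rw [Set.uIoc_of_le (by norm_num : (0:ℝ) ≤ 2)] at hs
    obtain ⟨hs0, hs2⟩ := hs
    have hrpow : ((2:ℝ) - s) ^ (-(1/2:ℝ)) = (Real.sqrt (2 - s))⁻¹ := by
      rw [Real.rpow_neg (by linarith), ← Real.sqrt_eq_rpow]
    rcases eq_or_lt_of_le hs2 with rfl | hs2
    · simp only [Real.norm_eq_abs]
      rw [show (2:ℝ) * 2 - 2 ^ 2 = 0 by norm_num, Real.sqrt_zero, div_zero,
        abs_zero]
      positivity
    · have hsq : Real.sqrt (2 * s - s ^ 2) = Real.sqrt s * Real.sqrt (2 - s) := by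
        rw [← Real.sqrt_mul hs0.le]; ring_nf
      have hA : (0:ℝ) < Real.sqrt s := Real.sqrt_pos.2 hs0
      have hB : (0:ℝ) < Real.sqrt (2 - s) := Real.sqrt_pos.2 (by linarith)
      have hrw : s ^ (m + 1) / Real.sqrt (2 * s - s ^ 2)
          = (s ^ m * Real.sqrt s) / Real.sqrt (2 - s) := by
        rw [hsq, show s ^ (m+1) = s ^ m * (Real.sqrt s * Real.sqrt s) by
          rw [Real.mul_self_sqrt hs0.le]; ring]
        field_simp
      have hnum : s ^ m * Real.sqrt s ≤ 2 ^ (m + 1) := by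
        have h1 : s ^ m ≤ 2 ^ m := pow_le_pow_left₀ hs0.le (by linarith) m
        have h2 : Real.sqrt s ≤ 2 := by
          calc Real.sqrt s ≤ Real.sqrt 4 := Real.sqrt_le_sqrt (by linarith)
          _ = 2 := by rw [show (4:ℝ) = 2^2 by norm_num, Real.sqrt_sq (by norm_num)]
        calc s ^ m * Real.sqrt s ≤ 2 ^ m * 2 :=
              mul_le_mul h1 h2 (Real.sqrt_nonneg s) (by positivity)
          _ = 2 ^ (m + 1) := by ring
      simp only [Real.norm_eq_abs]
      rw [hrw, abs_of_nonneg (by positivity), hrpow, ← div_eq_mul_inv]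
      gcongr

lemma derivSqrt {x : ℝ} (hx0 : 0 < x) (hx2 : x < 2) :
    HasDerivAt (fun s : ℝ => Real.sqrt (2 * s - s ^ 2))
      ((2 - 2 * x) / (2 * Real.sqrt (2 * x - x ^ 2))) x := by
  have hD : (0:ℝ) < 2 * x - x ^ 2 := by nlinarith
  have hinner : HasDerivAt (fun s : ℝ => 2 * s - s ^ 2) (2 - 2 * x) x := by
    have := ((hasDerivAt_id x).const_mul 2).sub (hasDerivAt_pow 2 x)
    simpa [Pi.sub_def] using this
  have := (Real.hasDerivAt_sqrt (ne_of_gt hD)).comp x hinner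
  refine this.congr_deriv ?_
  ring

lemma baseCase :
    ∫ s in (0:ℝ)..2, s ^ (0 + 1) / Real.sqrt (2 * s - s ^ 2) = Real.pi := by
  have hcont : ContinuousOn
      (fun s : ℝ => Real.arcsin (s - 1) - Real.sqrt (2 * s - s ^ 2)) (Icc 0 2) := by
    apply Continuous.continuousOn
    exact (Real.continuous_arcsin.comp (continuous_id.sub continuous_const)).sub
      (Real.continuous_sqrt.comp (by continuity))
  have hderiv : ∀ x ∈ Ioo (0:ℝ) 2,
      HasDerivWithinAt (fun s : ℝ => Real.arcsin (s - 1) - Real.sqrt (2 * s - s ^ 2))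
        (x ^ (0 + 1) / Real.sqrt (2 * x - x ^ 2)) (Ioi x) x := by
    intro x ⟨hx0, hx2⟩
    have hD : (0:ℝ) < 2 * x - x ^ 2 := by nlinarith
    have hsD : (0:ℝ) < Real.sqrt (2 * x - x ^ 2) := Real.sqrt_pos.2 hD
    have h1 : HasDerivAt (fun s : ℝ => Real.arcsin (s - 1))
        (1 / Real.sqrt (1 - (x - 1) ^ 2) * 1) x := by
      exact (Real.hasDerivAt_arcsin (by intro h; nlinarith [sub_eq_iff_eq_add.mp h])
        (by intro h; nlinarith [sub_eq_iff_eq_add.mp h])).comp x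
        ((hasDerivAt_id x).sub_const 1)
    have h2 := derivSqrt hx0 hx2
    have := h1.sub h2
    apply HasDerivAt.hasDerivWithinAt
    convert this using 1
    · rfl
    rw [show (1:ℝ) - (x - 1) ^ 2 = 2 * x - x ^ 2 by ring]
    field_simp
    try ring
  have := intervalIntegral.integral_eq_sub_of_hasDeriv_right_of_le
    (by norm_num : (0:ℝ) ≤ 2) hcont hderiv (intAux 0)
  rw [this, show (2:ℝ) * 2 - 2 ^ 2 = 0 by norm_num, show (2:ℝ) * 0 - 0 ^ 2 = 0 by norm_num,
    show (2:ℝ) - 1 = 1 by norm_num, show (0:ℝ) - 1 = -1 by norm_num,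
    Real.sqrt_zero, Real.arcsin_one, Real.arcsin_neg_one]
  ring

lemma recCase (n : ℕ) :
    ((n:ℝ) + 2) * ∫ s in (0:ℝ)..2, s ^ (n + 1 + 1) / Real.sqrt (2 * s - s ^ 2)
      = (2 * (n:ℝ) + 3) * ∫ s in (0:ℝ)..2, s ^ (n + 1) / Real.sqrt (2 * s - s ^ 2) := by
  set F := fun m : ℕ => fun s : ℝ => s ^ (m + 1) / Real.sqrt (2 * s - s ^ 2) with hF
  have hcont : ContinuousOn
      (fun s : ℝ => s ^ (n + 1) * Real.sqrt (2 * s - s ^ 2)) (Icc 0 2) := by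
    apply Continuous.continuousOn
    exact (continuous_pow (n+1)).mul (Real.continuous_sqrt.comp (by continuity))
  have hderiv : ∀ x ∈ Ioo (0:ℝ) 2,
      HasDerivWithinAt (fun s : ℝ => s ^ (n + 1) * Real.sqrt (2 * s - s ^ 2))
        ((2 * (n:ℝ) + 3) * F (n) x - ((n:ℝ) + 2) * F (n + 1) x) (Ioi x) x := by
    intro x ⟨hx0, hx2⟩
    have hD : (0:ℝ) < 2 * x - x ^ 2 := by nlinarith
    have hsD : (0:ℝ) < Real.sqrt (2 * x - x ^ 2) := Real.sqrt_pos.2 hD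
    have hmul : Real.sqrt (2 * x - x ^ 2) * Real.sqrt (2 * x - x ^ 2) = 2 * x - x ^ 2 :=
      Real.mul_self_sqrt hD.le
    have h1 := (hasDerivAt_pow (n + 1) x).mul (derivSqrt hx0 hx2)
    apply HasDerivAt.hasDerivWithinAt
    refine h1.congr_deriv ?_
    symm
    simp only [hF]
    generalize Real.sqrt (2 * x - x ^ 2) = S at hsD hmul ⊢
    rw [Nat.add_sub_cancel]
    push_cast
    field_simp
    linear_combination (-((n:ℝ)+1)*x^n) * hmul
  have hint : IntervalIntegrable
      (fun x => (2 * (n:ℝ) + 3) * F n x - ((n:ℝ) + 2) * F (n + 1) x) volume 0 2 :=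
    ((intAux n).const_mul _).sub ((intAux (n + 1)).const_mul _)
  have hFTC := intervalIntegral.integral_eq_sub_of_hasDeriv_right_of_le
    (by norm_num : (0:ℝ) ≤ 2) hcont hderiv hint
  rw [show (2:ℝ) * 2 - 2 ^ 2 = 0 by norm_num, show (2:ℝ) * 0 - 0 ^ 2 = 0 by norm_num] at hFTC
  simp only [Real.sqrt_zero, mul_zero, zero_pow (Nat.succ_ne_zero n), zero_mul, sub_zero] at hFTC
  rw [intervalIntegral.integral_sub ((intAux n).const_mul _) ((intAux (n + 1)).const_mul _),
    intervalIntegral.integral_const_mul, intervalIntegral.integral_const_mul] at hFTC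
  linarith [hFTC]

lemma mainAux (n : ℕ) :
    ∫ s in (0:ℝ)..2, s ^ (n + 1) / Real.sqrt (2 * s - s ^ 2)
      = Real.pi * ∏ j ∈ Finset.range n, ((2 : ℝ) - 1 / ((j : ℝ) + 2)) := by
  induction n with
  | zero => simpa using baseCase
  | succ n ih =>
    have hrec := recCase n
    rw [ih] at hrec
    have hne : ((n:ℝ) + 2) ≠ 0 := by positivity
    rw [Finset.prod_range_succ, show ((2:ℝ) - 1 / ((n:ℝ) + 2)) = (2 * n + 3) / (n + 2) by
      field_simp; ring]
    field_simp at hrec ⊢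
    linarith [hrec]

theorem stmt5 (n : ℕ) :
    (∏ j ∈ Finset.range n, ((2 : ℝ) - 1 / ((j : ℝ) + 2)))
      = ∫ s in Set.Icc (0 : ℝ) 2, s ^ n * (s / (Real.pi * Real.sqrt (2 * s - s ^ 2))) := by
  have hrw : ∀ s : ℝ, s ^ n * (s / (Real.pi * Real.sqrt (2 * s - s ^ 2)))
      = Real.pi⁻¹ * (s ^ (n + 1) / Real.sqrt (2 * s - s ^ 2)) := by
    intro s
    rw [div_eq_mul_inv, div_eq_mul_inv, mul_inv]
    ring
  simp_rw [hrw]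
  rw [MeasureTheory.integral_Icc_eq_integral_Ioc,
    ← intervalIntegral.integral_of_le (by norm_num : (0:ℝ) ≤ 2),
    intervalIntegral.integral_const_mul, mainAux n, inv_mul_cancel_left₀ Real.pi_ne_zero]
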